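/- Let $m,N$ be integers with $2\le m\le N-2$, $N=N_1+N_2$ with $N_1,N_2\ge1$, and $m=m_1+m_2$ with $0\le m_i\le N_i$. If $(N-m-1)(m-1)-1 = \sum_{i=1}^2 (N_i-m_i)m_i - \max_i N_i$ fails to be a strict inequality $\ge$, i.e. equality holds in $(N-m)m-\sum_i (N_i-m_i)m_i \ge N-\max_i N_i$, then $N_1=N_2=2$ and $m_1=m_2=1$ (hence $N=4$, $m=2$). -/
import Mathlib

set_option maxHeartbeats 1000000


theorem stmt_18 (N m N₁ N₂ m₁ m₂ : ℕ)
    (h2 : 2 ≤ m) (h3 : m + 2 ≤ N)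
    (hN : N = N₁ + N₂) (hN₁ : 1 ≤ N₁) (hN₂ : 1 ≤ N₂)
    (hm : m = m₁ + m₂) (hm₁ : m₁ ≤ N₁) (hm₂ : m₂ ≤ N₂)
    (heq : ((N : ℤ) - m) * m - (((N₁ : ℤ) - m₁) * m₁ + ((N₂ : ℤ) - m₂) * m₂) =
      (N : ℤ) - max (N₁ : ℤ) (N₂ : ℤ)) :
    N₁ = 2 ∧ N₂ = 2 ∧ m₁ = 1 ∧ m₂ = 1 := by
  -- pass to integers
  have hNc : (N : ℤ) = N₁ + N₂ := by exact_mod_cast hN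
  have hmc : (m : ℤ) = m₁ + m₂ := by exact_mod_cast hm
  have hm₁c : (m₁ : ℤ) ≤ N₁ := by exact_mod_cast hm₁
  have hm₂c : (m₂ : ℤ) ≤ N₂ := by exact_mod_cast hm₂
  have hN₁c : (1 : ℤ) ≤ N₁ := by exact_mod_cast hN₁
  have hN₂c : (1 : ℤ) ≤ N₂ := by exact_mod_cast hN₂
  have h2c : (2 : ℤ) ≤ m := by exact_mod_cast h2
  have h3c : (m : ℤ) + 2 ≤ N := by exact_mod_cast h3
  have hm₁nn : (0 : ℤ) ≤ m₁ := Int.natCast_nonneg m₁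
  have hm₂nn : (0 : ℤ) ≤ m₂ := Int.natCast_nonneg m₂
  have hmaxmin : (N : ℤ) - max (N₁ : ℤ) N₂ = min (N₁ : ℤ) N₂ := by omega
  have key : ((N₁ : ℤ) - m₁) * m₂ + ((N₂ : ℤ) - m₂) * m₁ = min (N₁ : ℤ) N₂ := by
    rw [← hmaxmin, ← heq, hNc, hmc]; ring
  have hk₁ : ((N₁ : ℤ) - m₁) * m₂ + ((N₂ : ℤ) - m₂) * m₁ ≤ N₁ := key ▸ min_le_left _ _
  have hk₂ : ((N₁ : ℤ) - m₁) * m₂ + ((N₂ : ℤ) - m₂) * m₁ ≤ N₂ := key ▸ min_le_right _ _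
  have hmin1 : (1 : ℤ) ≤ ((N₁ : ℤ) - m₁) * m₂ + ((N₂ : ℤ) - m₂) * m₁ := by
    rw [key]; exact le_min hN₁c hN₂c
  have hl₁ : (0:ℤ) ≤ (N₁:ℤ) - m₁ := by omega
  have hl₂ : (0:ℤ) ≤ (N₂:ℤ) - m₂ := by omega
  have hm₁pos : (1:ℤ) ≤ m₁ := by
    by_contra h
    have hm₁0 : (m₁:ℤ) = 0 := by omega
    have hmul : ((N₁:ℤ) - m₁) * 2 ≤ ((N₁:ℤ) - m₁) * m₂ :=
      mul_le_mul_of_nonneg_left (by omega) hl₁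
    have z : ((N₂:ℤ) - m₂) * m₁ = 0 := by rw [hm₁0]; ring
    linarith [hk₁, hmin1, hmul, z, hm₁0]
  have hm₂pos : (1:ℤ) ≤ m₂ := by
    by_contra h
    have hm₂0 : (m₂:ℤ) = 0 := by omega
    have hmul : ((N₂:ℤ) - m₂) * 2 ≤ ((N₂:ℤ) - m₂) * m₁ :=
      mul_le_mul_of_nonneg_left (by omega) hl₂
    have z : ((N₁:ℤ) - m₁) * m₂ = 0 := by rw [hm₂0]; ring
    linarith [hk₂, hmin1, hmul, z, hm₂0]
  have hl₁pos : (1:ℤ) ≤ (N₁:ℤ) - m₁ := by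
    by_contra h
    have h0 : (N₁:ℤ) - m₁ = 0 := by omega
    have hmul : (2:ℤ) * m₁ ≤ ((N₂:ℤ) - m₂) * m₁ :=
      mul_le_mul_of_nonneg_right (by omega) hm₁nn
    have z : ((N₁:ℤ) - m₁) * m₂ = 0 := by rw [h0]; ring
    linarith [hk₁, hmin1, hmul, z, h0]
  have hl₂pos : (1:ℤ) ≤ (N₂:ℤ) - m₂ := by
    by_contra h
    have h0 : (N₂:ℤ) - m₂ = 0 := by omega
    have hmul : (2:ℤ) * m₂ ≤ ((N₁:ℤ) - m₁) * m₂ :=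
      mul_le_mul_of_nonneg_right (by omega) hm₂nn
    have z : ((N₂:ℤ) - m₂) * m₁ = 0 := by rw [h0]; ring
    linarith [hk₂, hmin1, hmul, z, h0]
  -- products bounded below
  have p₁ : (0:ℤ) ≤ ((N₁:ℤ) - m₁ - 1) * (m₂ - 1) := mul_nonneg (by linarith) (by linarith)
  have p₂ : (0:ℤ) ≤ ((N₂:ℤ) - m₂ - 1) * (m₁ - 1) := mul_nonneg (by linarith) (by linarith)
  have q₁ : ((N₁:ℤ) - m₁) * 1 ≤ ((N₁:ℤ) - m₁) * m₂ := mul_le_mul_of_nonneg_left hm₂pos hl₁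
  have q₂ : ((N₂:ℤ) - m₂) * 1 ≤ ((N₂:ℤ) - m₂) * m₁ := mul_le_mul_of_nonneg_left hm₁pos hl₂
  have r₁ : (1:ℤ) * m₂ ≤ ((N₁:ℤ) - m₁) * m₂ := mul_le_mul_of_nonneg_right hl₁pos hm₂nn
  have r₂ : (1:ℤ) * m₁ ≤ ((N₂:ℤ) - m₂) * m₁ := mul_le_mul_of_nonneg_right hl₂pos hm₁nn
  have e₁ : (m₂:ℤ) = 1 := by nlinarith [hk₁, p₁, r₂, hm₂pos]
  have e₂ : (N₂:ℤ) - m₂ = 1 := by nlinarith [hk₁, p₂, q₁, hl₂pos]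
  have e₃ : (m₁:ℤ) = 1 := by nlinarith [hk₂, p₂, r₁, hm₁pos]
  have e₄ : (N₁:ℤ) - m₁ = 1 := by nlinarith [hk₂, p₁, q₂, hl₁pos]
  have hfin : (N₁:ℤ) = 2 ∧ (N₂:ℤ) = 2 ∧ (m₁:ℤ) = 1 ∧ (m₂:ℤ) = 1 := by omega
  exact ⟨by exact_mod_cast hfin.1, by exact_mod_cast hfin.2.1,
    by exact_mod_cast hfin.2.2.1, by exact_mod_cast hfin.2.2.2⟩
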